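/- Let ε₀, δ ∈ (0,1), let Ĉ ⊆ Σ̂^m be a code of block length m in which any two distinct codewords differ in at least δ·m coordinates, and let SC = (sc₁,…,sc_m) be an ε₀-synchronization circle of length m over an alphabet Σ_SC. Define the code C = { ((ĉ₁, sc₁), …, (ĉ_m, sc_m)) : (ĉ₁,…,ĉ_m) ∈ Ĉ } over the alphabet Σ = Σ̂ × Σ_SC, and let S be the concatenation of N pairwise distinct codewords of C. Then S is an ε₁-synchronization circle, where ε₁ = 10·(1 − δ·(1−ε₀)/(1+ε₀)). -/

import Mathlib

/-- The length of a longest common subsequence of two strings (lists). -/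
noncomputable def lcsLen {α : Type*} (S T : List α) : ℕ :=
  sSup {n | ∃ U : List α, U.length = n ∧ U.Sublist S ∧ U.Sublist T}

/-- The edit distance (insertions/deletions) between two strings, via
`ED(S,T) = |S| + |T| - 2·LCS(S,T)`. -/
noncomputable def editDistance {α : Type*} (S T : List α) : ℕ :=
  S.length + T.length - 2 * lcsLen S T

/-- `strSlice S a b` is the substring `S[a, b)` of `S` (1-indexed, `b` excluded). -/
def strSlice {α : Type*} (S : List α) (a b : ℕ) : List α :=
  (S.drop (a - 1)).take (b - a)

/-- `islice f a b` is the substring `f[a, b)` of the infinite string `f`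
(1-indexed, `b` excluded). -/
def islice {α : Type*} (f : ℕ → α) (a b : ℕ) : List α :=
  (List.range (b - a)).map fun t => f (a + t)

/-- `S` is an ε-synchronization string: for all `1 ≤ i < j < k ≤ |S| + 1`,
`ED(S[i,j), S[j,k)) > (1-ε)(k-i)`. -/
def IsSyncString {α : Type*} (ε : ℝ) (S : List α) : Prop :=
  ∀ i j k : ℕ, 1 ≤ i → i < j → j < k → k ≤ S.length + 1 →
    (1 - ε) * ((k : ℝ) - (i : ℝ)) < (editDistance (strSlice S i j) (strSlice S j k) : ℝ)

/-- `S` is an ε-synchronization circle: every cyclic rotation of `S` is an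
ε-synchronization string. -/
def IsSyncCircle {α : Type*} (ε : ℝ) (S : List α) : Prop :=
  ∀ i : ℕ, 1 ≤ i → i ≤ S.length → IsSyncString ε (S.rotate (i - 1))

/-- An infinite ε-synchronization string (1-indexed). -/
def IsInfSyncString {α : Type*} (ε : ℝ) (f : ℕ → α) : Prop :=
  ∀ i j k : ℕ, 1 ≤ i → i < j → j < k →
    (1 - ε) * ((k : ℝ) - (i : ℝ)) < (editDistance (islice f i j) (islice f j k) : ℝ)

/-- `S` is a `c`-long-distance ε-synchronization string: for all
`1 ≤ i < j ≤ i' < j' ≤ |S| + 1` with `l = (j-i)+(j'-i')`, if the two intervals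
are adjacent (`i' = j`) or `l > c · log |S|`, then
`ED(S[i,j), S[i',j')) > (1-ε)·l`. -/
noncomputable def IsLongDistSyncString {α : Type*} (c ε : ℝ) (S : List α) : Prop :=
  ∀ i j i' j' : ℕ, 1 ≤ i → i < j → j ≤ i' → i' < j' → j' ≤ S.length + 1 →
    (i' = j ∨ c * Real.log (S.length : ℝ) < ((j : ℝ) - i) + ((j' : ℝ) - i')) →
    (1 - ε) * (((j : ℝ) - i) + ((j' : ℝ) - i')) <
      (editDistance (strSlice S i j) (strSlice S i' j') : ℝ)

/-- An infinite weak ε-synchronization string: for all `1 ≤ i < j < k`,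
`ED(S[i,j), S[j,k)) ≥ ⌊(1-ε)(k-i)⌋`. -/
def IsInfWeakSyncString {α : Type*} (ε : ℝ) (f : ℕ → α) : Prop :=
  ∀ i j k : ℕ, 1 ≤ i → i < j → j < k →
    ((⌊(1 - ε) * ((k : ℝ) - (i : ℝ))⌋ : ℤ) : ℝ) ≤
      (editDistance (islice f i j) (islice f j k) : ℝ)


namespace SyncAux
open List

def lt2 : ℕ × ℕ → ℕ × ℕ → Prop := fun s t => s.1 < t.1 ∧ s.2 < t.2

lemma lt2_trans : Transitive lt2 := fun _ _ _ h h' => ⟨h.1.trans h'.1, h.2.trans h'.2⟩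

variable {α β : Type*}

lemma lcs_set_nonempty (A B : List α) :
    Set.Nonempty {n | ∃ U : List α, U.length = n ∧ U.Sublist A ∧ U.Sublist B} :=
  ⟨0, [], rfl, nil_sublist A, nil_sublist B⟩

lemma lcs_set_bdd (A B : List α) :
    BddAbove {n | ∃ U : List α, U.length = n ∧ U.Sublist A ∧ U.Sublist B} := by
  refine ⟨A.length, fun n hn => ?_⟩
  obtain ⟨U, hU, hA, -⟩ := hn
  exact hU ▸ hA.length_le

lemma exists_lcs (A B : List α) :
    ∃ U : List α, U.length = lcsLen A B ∧ U.Sublist A ∧ U.Sublist B :=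
  Nat.sSup_mem (lcs_set_nonempty A B) (lcs_set_bdd A B)

lemma le_lcsLen {A B U : List α} (hA : U.Sublist A) (hB : U.Sublist B) :
    U.length ≤ lcsLen A B :=
  le_csSup (lcs_set_bdd A B) ⟨U, rfl, hA, hB⟩

lemma lcsLen_le_left (A B : List α) : lcsLen A B ≤ A.length := by
  refine csSup_le (lcs_set_nonempty A B) ?_
  rintro n ⟨U, hU, hA, -⟩
  exact hU ▸ hA.length_le

lemma lcsLen_le_right (A B : List α) : lcsLen A B ≤ B.length := by
  refine csSup_le (lcs_set_nonempty A B) ?_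
  rintro n ⟨U, hU, -, hB⟩
  exact hU ▸ hB.length_le

lemma two_lcs_le (A B : List α) : 2 * lcsLen A B ≤ A.length + B.length := by
  have h1 := lcsLen_le_left A B
  have h2 := lcsLen_le_right A B
  omega

lemma editDistance_real (A B : List α) :
    (editDistance A B : ℝ) = A.length + B.length - 2 * lcsLen A B := by
  have h := two_lcs_le A B
  unfold editDistance
  push_cast [Nat.cast_sub h]
  ring

lemma lcsLen_map_le (f : α → β) (A B : List α) :
    lcsLen A B ≤ lcsLen (A.map f) (B.map f) := by
  obtain ⟨U, hlen, hA, hB⟩ := exists_lcs A B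
  calc lcsLen A B = (U.map f).length := by simp [hlen]
  _ ≤ _ := le_lcsLen (hA.map f) (hB.map f)

lemma strSlice_length (S : List α) (a b : ℕ) (ha : 1 ≤ a) (hab : a ≤ b)
    (hb : b ≤ S.length + 1) : (strSlice S a b).length = b - a := by
  simp only [strSlice, length_take, length_drop]
  omega

lemma strSlice_getElem (S : List α) (a b t : ℕ)
    (h : t < (strSlice S a b).length) (h' : a - 1 + t < S.length) :
    (strSlice S a b)[t] = S[a - 1 + t] := by
  simp only [strSlice] at h ⊢
  rw [List.getElem_take, List.getElem_drop]

def seg (f : ℕ → α) (x L : ℕ) : List α := (List.range L).map fun t => f (x + t)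

@[simp] lemma seg_length (f : ℕ → α) (x L : ℕ) : (seg f x L).length = L := by
  simp [seg]

lemma seg_getElem (f : ℕ → α) (x L t : ℕ) (h : t < (seg f x L).length) :
    (seg f x L)[t] = f (x + t) := by
  simp [seg]

lemma strSlice_eq_seg (S : List α) (g : ℕ → α)
    (hget : ∀ (p : ℕ) (hp : p < S.length), S[p] = g p)
    (a b : ℕ) (ha : 1 ≤ a) (hab : a ≤ b) (hb : b ≤ S.length + 1) :
    strSlice S a b = seg g (a - 1) (b - a) := by
  apply List.ext_getElem
  · rw [strSlice_length S a b ha hab hb, seg_length]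
  · intro t h1 h2
    rw [strSlice_length S a b ha hab hb] at h1
    rw [seg_getElem, strSlice_getElem S a b t (by rwa [strSlice_length S a b ha hab hb]) (by omega),
      hget]

end SyncAux

namespace SyncAux
open List

variable {α β : Type*}

lemma cs_exists : ∀ (fuel : ℕ) (M : List (ℕ × ℕ)) (A B : List α), M.length ≤ fuel →
    M.Pairwise lt2 →
    (∀ pq ∈ M, ∃ (h1 : pq.1 < A.length) (h2 : pq.2 < B.length), A[pq.1] = B[pq.2]) →
    ∃ U : List α, U.length = M.length ∧ U.Sublist A ∧ U.Sublist B := by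
  intro fuel
  induction fuel with
  | zero =>
    intro M A B hlen _ _
    interval_cases hM : M.length
    · exact ⟨[], by simp, nil_sublist _, nil_sublist _⟩
  | succ n IH =>
    intro M A B hlen hpw hval
    match M with
    | [] => exact ⟨[], rfl, nil_sublist _, nil_sublist _⟩
    | (p, q) :: M' =>
      obtain ⟨h1, h2, heq⟩ := hval (p, q) mem_cons_self
      have hpw' : M'.Pairwise lt2 := (pairwise_cons.mp hpw).2
      have hhead : ∀ rs ∈ M', p < rs.1 ∧ q < rs.2 := fun rs h => (pairwise_cons.mp hpw).1 rs h
      set A' := A.drop (p + 1) with hA'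
      set B' := B.drop (q + 1) with hB'
      set M'' := M'.map (fun rs => (rs.1 - (p + 1), rs.2 - (q + 1))) with hM''
      have hpw'' : M''.Pairwise lt2 := by
        rw [hM'', pairwise_map]
        refine (hpw'.imp_of_mem ?_)
        intro a b ha hb hab
        obtain ⟨hab1, hab2⟩ := hab
        have h1a := (hhead a ha).1
        have h2a := (hhead a ha).2
        exact ⟨by omega, by omega⟩
      have hval'' : ∀ pq ∈ M'', ∃ (h1 : pq.1 < A'.length) (h2 : pq.2 < B'.length),
          A'[pq.1] = B'[pq.2] := by
        intro pq hpq
        rw [hM'', mem_map] at hpq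
        obtain ⟨rs, hrs, rfl⟩ := hpq
        obtain ⟨ha1, ha2, hv⟩ := hval rs (mem_cons_of_mem _ hrs)
        have hp1 := (hhead rs hrs).1
        have hq1 := (hhead rs hrs).2
        have l1 : rs.1 - (p + 1) < A'.length := by
          rw [hA', length_drop]; omega
        have l2 : rs.2 - (q + 1) < B'.length := by
          rw [hB', length_drop]; omega
        refine ⟨l1, l2, ?_⟩
        have e1 : A'[rs.1 - (p + 1)]'l1 = A[p + 1 + (rs.1 - (p + 1))]'(by omega) :=
          List.getElem_drop
        have e2 : B'[rs.2 - (q + 1)]'l2 = B[q + 1 + (rs.2 - (q + 1))]'(by omega) :=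
          List.getElem_drop
        rw [e1, e2]
        convert hv using 2 <;> omega
      have hlen'' : M''.length ≤ n := by
        rw [hM'', length_map]
        simp only [length_cons] at hlen
        omega
      obtain ⟨U', hU'len, hU'A, hU'B⟩ := IH M'' A' B' hlen'' hpw'' hval''
      refine ⟨A[p] :: U', ?_, ?_, ?_⟩
      · simp [hU'len, hM'']
      · have hmem : [A[p]] <+ A.take (p + 1) := by
          rw [List.singleton_sublist]
          have hg : (A.take (p + 1))[p]'(by simp [length_take]; omega) = A[p] :=
            List.getElem_take
          exact hg ▸ List.getElem_mem _
        rw [show (A[p] :: U') = [A[p]] ++ U' from rfl]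
        conv_rhs => rw [← List.take_append_drop (p + 1) A]
        exact hmem.append hU'A
      · have hmem : [A[p]] <+ B.take (q + 1) := by
          rw [List.singleton_sublist, heq]
          have hg : (B.take (q + 1))[q]'(by simp [length_take]; omega) = B[q] :=
            List.getElem_take
          exact hg ▸ List.getElem_mem _
        rw [show (A[p] :: U') = [A[p]] ++ U' from rfl]
        conv_rhs => rw [← List.take_append_drop (q + 1) B]
        exact hmem.append hU'B

lemma matching_le_lcs (M : List (ℕ × ℕ)) (A B : List α) (hpw : M.Pairwise lt2)
    (hval : ∀ pq ∈ M, ∃ (h1 : pq.1 < A.length) (h2 : pq.2 < B.length), A[pq.1] = B[pq.2]) :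
    M.length ≤ lcsLen A B := by
  obtain ⟨U, hUlen, hA, hB⟩ := cs_exists M.length M A B le_rfl hpw hval
  exact hUlen ▸ le_lcsLen hA hB

end SyncAux

namespace SyncAux
open List

variable {α : Type*}

lemma not_pred_of_dropWhile_cons {γ : Type*} {p : γ → Bool} :
    ∀ {l : List γ} {x : γ} {xs : List γ}, l.dropWhile p = x :: xs → ¬ p x := by
  intro l
  induction l with
  | nil => intro x xs h; simp [List.dropWhile] at h
  | cons a l ih =>
    intro x xs h
    by_cases hp : p a = true
    · rw [List.dropWhile_cons_of_pos hp] at h; exact ih h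
    · rw [List.dropWhile_cons_of_neg hp] at h
      injection h with h1 _
      subst h1
      simpa using hp

lemma self_matching (T : List α) (ε : ℝ) (hε : 0 ≤ ε) (hT : IsSyncString ε T) :
    ∀ (fuel : ℕ) (M : List (ℕ × ℕ)), M.length ≤ fuel → M.Pairwise lt2 →
    (∀ pq ∈ M, pq.1 < pq.2 ∧ pq.2 < T.length ∧
      ∀ (h1 : pq.1 < T.length) (h2 : pq.2 < T.length), T[pq.1] = T[pq.2]) →
    ∀ pq₁ ∈ M.head?, (M.length : ℝ) ≤
      ε / 2 * (((T.length : ℝ) - pq₁.1) + ((T.length : ℝ) - pq₁.2)) := by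
  intro fuel
  induction fuel with
  | zero =>
    intro M hlen _ _ pq₁ hh
    have : M = [] := List.eq_nil_of_length_eq_zero (Nat.le_zero.mp hlen)
    subst this
    simp at hh
  | succ n IH =>
    intro M hlen hpw hval pq₁ hhead
    match M, hhead with
    | pq₁' :: M₀, hhead =>
    have hpq1eq : pq₁' = pq₁ := by simpa using hhead
    subst hpq1eq
    set P : ℕ × ℕ → Bool := fun pq => decide (pq.1 < pq₁'.2) with hP
    set M : List (ℕ × ℕ) := pq₁' :: M₀ with hM
    set G := M.takeWhile P with hGdef
    set R := M.dropWhile P with hRdef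
    have hGR : G ++ R = M := List.takeWhile_append_dropWhile (p := P) (l := M)
    have hp1q1 : pq₁'.1 < pq₁'.2 := (hval pq₁' (by simp [hM])).1
    have hGcons : G = pq₁' :: M₀.takeWhile P := by
      rw [hGdef, hM, List.takeWhile_cons_of_pos (by simp [hP, hp1q1])]
    have hGne : G ≠ [] := by rw [hGcons]; simp
    have hGsub : G <+ M := List.takeWhile_sublist _
    have hRsub : R <+ M := List.dropWhile_sublist _
    have hGpw : G.Pairwise lt2 := hpw.sublist hGsub
    have hGmem : ∀ pq ∈ G, pq ∈ M := fun pq h => hGsub.mem h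
    have hGpred : ∀ pq ∈ G, pq.1 < pq₁'.2 := by
      intro pq h
      have := List.mem_takeWhile_imp (hGdef ▸ h)
      simpa [hP] using this
    set gl := G.getLast hGne with hgl
    have hgl_mem : gl ∈ G := List.getLast_mem hGne
    have hle_last : ∀ pq ∈ G, pq.2 ≤ gl.2 := by
      intro pq hpq
      have hdec : G.dropLast ++ [gl] = G := List.dropLast_append_getLast hGne
      have hpw2 : (G.dropLast ++ [gl]).Pairwise lt2 := by rw [hdec]; exact hGpw
      rw [← hdec] at hpq
      rcases List.mem_append.mp hpq with h | h
      · exact le_of_lt ((List.pairwise_append.mp hpw2).2.2 pq h gl (by simp)).2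
      · simp at h; subst h; exact le_rfl
    have hfirst : ∀ pq ∈ G, pq₁'.1 ≤ pq.1 ∧ pq₁'.2 ≤ pq.2 := by
      intro pq hpq
      rw [hGcons] at hpq
      rcases List.mem_cons.mp hpq with h | h
      · subst h; exact ⟨le_rfl, le_rfl⟩
      · have h2 := (List.pairwise_cons.mp (hGcons ▸ hGpw)).1 pq h
        exact ⟨le_of_lt h2.1, le_of_lt h2.2⟩
    have hgl_bounds := hval gl (hGmem gl hgl_mem)
    have hql_lt : gl.2 < T.length := hgl_bounds.2.1
    have hq1_le : pq₁'.2 ≤ gl.2 := (hfirst gl hgl_mem).2.trans le_rfl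
    -- slices
    set A₁ := strSlice T (pq₁'.1 + 1) (pq₁'.2 + 1) with hA₁
    set B₁ := strSlice T (pq₁'.2 + 1) (gl.2 + 2) with hB₁
    have lenA : A₁.length = pq₁'.2 - pq₁'.1 := by
      rw [hA₁, strSlice_length T _ _ (by omega) (by omega) (by omega)]; omega
    have lenB : B₁.length = gl.2 + 1 - pq₁'.2 := by
      rw [hB₁, strSlice_length T _ _ (by omega) (by omega) (by omega)]; omega
    set M₁ := G.map (fun pq => (pq.1 - pq₁'.1, pq.2 - pq₁'.2)) with hM₁
    have hpwM₁ : M₁.Pairwise lt2 := by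
      rw [hM₁, pairwise_map]
      refine hGpw.imp_of_mem ?_
      intro a b ha hb hab
      obtain ⟨hab1, hab2⟩ := hab
      have h1a := hfirst a ha
      exact ⟨by omega, by omega⟩
    have hvalM₁ : ∀ rs ∈ M₁, ∃ (h1 : rs.1 < A₁.length) (h2 : rs.2 < B₁.length),
        A₁[rs.1] = B₁[rs.2] := by
      intro rs hrs
      rw [hM₁, mem_map] at hrs
      obtain ⟨pq, hpq, rfl⟩ := hrs
      have hf := hfirst pq hpq
      have hpred := hGpred pq hpq
      have hlast := hle_last pq hpq
      have hvv := hval pq (hGmem pq hpq)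
      have l1 : pq.1 - pq₁'.1 < A₁.length := by rw [lenA]; omega
      have l2 : pq.2 - pq₁'.2 < B₁.length := by rw [lenB]; omega
      refine ⟨l1, l2, ?_⟩
      have e1 : A₁[pq.1 - pq₁'.1]'l1 = T[(pq₁'.1 + 1 - 1) + (pq.1 - pq₁'.1)]'(by omega) :=
        strSlice_getElem T _ _ _ l1 (by omega)
      have e2 : B₁[pq.2 - pq₁'.2]'l2 = T[(pq₁'.2 + 1 - 1) + (pq.2 - pq₁'.2)]'(by omega) :=
        strSlice_getElem T _ _ _ l2 (by omega)
      rw [e1, e2]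
      have := hvv.2.2 (by omega) (by omega)
      convert this using 2 <;> omega
    have hlcsG : G.length ≤ lcsLen A₁ B₁ := by
      have := matching_le_lcs M₁ A₁ B₁ hpwM₁ hvalM₁
      simpa [hM₁] using this
    have hsync := hT (pq₁'.1 + 1) (pq₁'.2 + 1) (gl.2 + 2) (by omega) (by omega) (by omega)
      (by omega)
    rw [← hA₁, ← hB₁] at hsync
    have hED : (editDistance A₁ B₁ : ℝ) =
        ((pq₁'.2 : ℝ) - pq₁'.1) + ((gl.2 : ℝ) + 1 - pq₁'.2) - 2 * lcsLen A₁ B₁ := by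
      rw [editDistance_real, lenA, lenB]
      push_cast [Nat.cast_sub (le_of_lt hp1q1), Nat.cast_sub (by omega : pq₁'.2 ≤ gl.2 + 1)]
      ring
    have hsync' : (1 - ε) * (((gl.2 : ℝ) + 2) - (pq₁'.1 + 1)) <
        (editDistance A₁ B₁ : ℝ) := by
      convert hsync using 3 <;> push_cast <;> ring
    have hG_bound : (G.length : ℝ) <
        ε / 2 * (((pq₁'.2 : ℝ) - pq₁'.1) + ((gl.2 : ℝ) + 1 - pq₁'.2)) := by
      have hc : (G.length : ℝ) ≤ (lcsLen A₁ B₁ : ℝ) := by exact_mod_cast hlcsG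
      nlinarith [hsync', hED]
    -- case on R
    rcases hRcase : R with _ | ⟨pq', R₀⟩
    · have hMG : M = G := by rw [← hGR, hRcase, append_nil]
      have hlenMG : (M.length : ℝ) = G.length := by rw [hMG]
      have c1 : (pq₁'.2 : ℝ) ≤ T.length := by exact_mod_cast (by omega : pq₁'.2 ≤ T.length)
      have c2 : (gl.2 : ℝ) + 1 ≤ T.length := by
        have : gl.2 + 1 ≤ T.length := by omega
        exact_mod_cast this
      have hkey : ((pq₁'.2 : ℝ) - pq₁'.1) + ((gl.2 : ℝ) + 1 - pq₁'.2) ≤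
          ((T.length : ℝ) - pq₁'.1) + ((T.length : ℝ) - pq₁'.2) := by linarith
      have := mul_le_mul_of_nonneg_left hkey (by linarith : (0:ℝ) ≤ ε / 2)
      linarith
    · have hpq'R : pq' ∈ R := by rw [hRcase]; simp
      have hpq'M : pq' ∈ M := hRsub.mem hpq'R
      have h0R : 0 < R.length := by rw [hRcase]; simp
      have hnotpred : ¬ pq'.1 < pq₁'.2 := by
        have hdw : M.dropWhile P = pq' :: R₀ := by rw [← hRdef]; exact hRcase
        have hnp := not_pred_of_dropWhile_cons hdw
        simpa [hP] using hnp
      have hcross : lt2 gl pq' := by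
        have hpwGR : (G ++ R).Pairwise lt2 := by rw [hGR]; exact hpw
        exact (List.pairwise_append.mp hpwGR).2.2 gl hgl_mem pq' hpq'R
      have hlenGR : G.length + R.length = M.length := by
        rw [← hGR, length_append]
      have hG1 : 1 ≤ G.length := by
        rw [hGcons]; simp
      have hRlen : R.length ≤ n := by
        have : M.length ≤ n + 1 := hlen
        omega
      have hIH := IH R hRlen (hpw.sublist hRsub)
        (fun pq h => hval pq (hRsub.mem h)) pq' (by rw [hRcase]; rfl)
      -- combine
      have c1 : (pq₁'.2 : ℝ) ≤ pq'.1 := by exact_mod_cast Nat.not_lt.mp hnotpred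
      have c2 : (gl.2 : ℝ) + 1 ≤ pq'.2 := by
        have : gl.2 + 1 ≤ pq'.2 := hcross.2
        exact_mod_cast this
      have hlenM : (M.length : ℝ) = (G.length : ℝ) + R.length := by
        exact_mod_cast congrArg (Nat.cast : ℕ → ℝ) hlenGR.symm
      have hkey : (((pq₁'.2 : ℝ) - pq₁'.1) + ((gl.2 : ℝ) + 1 - pq₁'.2)) +
          (((T.length : ℝ) - pq'.1) + ((T.length : ℝ) - pq'.2)) ≤
          ((T.length : ℝ) - pq₁'.1) + ((T.length : ℝ) - pq₁'.2) := by linarith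
      have := mul_le_mul_of_nonneg_left hkey (by linarith : (0:ℝ) ≤ ε / 2)
      have hexp : ε / 2 * ((((pq₁'.2 : ℝ) - pq₁'.1) + ((gl.2 : ℝ) + 1 - pq₁'.2)) +
          (((T.length : ℝ) - pq'.1) + ((T.length : ℝ) - pq'.2))) =
          ε / 2 * (((pq₁'.2 : ℝ) - pq₁'.1) + ((gl.2 : ℝ) + 1 - pq₁'.2)) +
          ε / 2 * (((T.length : ℝ) - pq'.1) + ((T.length : ℝ) - pq'.2)) := by ring
      linarith [hIH, hG_bound]

end SyncAux

namespace SyncAux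
open List

lemma res_lt_res {m a b : ℕ} (h : a < b) (hdiv : a / m = b / m) : a % m < b % m := by
  have e1 := Nat.div_add_mod a m
  have e2 := Nat.div_add_mod b m
  rw [hdiv] at e1
  generalize hk : m * (b / m) = k at e1 e2
  generalize h1 : a % m = ra at e1 ⊢
  generalize h2 : b % m = rb at e2 ⊢
  omega

section Counting

variable {Sh Ssc : Type*}
variable {m N : ℕ} {ε₀ δ : ℝ}
variable {fq : ℕ → Sh × Ssc} {cw : ℕ → ℕ → Sh} {gg : ℕ → Ssc}

lemma window_bound
    (hm : 0 < m)
    (Hfst : ∀ q, (fq q).1 = cw (q / m) (q % m))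
    (Hsnd : ∀ q, (fq q).2 = gg (q % m))
    (Hal : ∀ u v : ℕ, u < v → v - u < N → ∀ Ms : List ℕ, Ms.Pairwise (· < ·) →
      (∀ s ∈ Ms, s < m ∧ cw u s = cw v s) → (Ms.length : ℝ) ≤ (1 - δ) * m)
    (Hun : ∀ Mp : List (ℕ × ℕ), Mp.Pairwise lt2 →
      (∀ pq ∈ Mp, pq.1 < m ∧ pq.2 < m ∧ pq.1 ≠ pq.2 ∧ gg pq.1 = gg pq.2) →
      (Mp.length : ℝ) ≤ 2 * ε₀ * m)
    (hδ1 : δ ≤ 1)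
    (U V : ℕ) (M : List (ℕ × ℕ)) (hpw : M.Pairwise lt2)
    (hmem : ∀ pq ∈ M, pq.1 < pq.2 ∧ fq pq.1 = fq pq.2 ∧ pq.2 - pq.1 < N * m ∧
      pq.1 / m = U ∧ pq.2 / m = V) :
    (M.length : ℝ) ≤ (1 - δ) * m + 2 * ε₀ * m := by
  classical
  set Pal : ℕ × ℕ → Bool := fun pq => decide (pq.1 % m = pq.2 % m) with hPal
  set Mal := M.filter Pal with hMal
  set Mun := M.filter (fun pq => ! Pal pq) with hMun
  have hsplit : Mal.length + Mun.length = M.length := by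
    have := (List.filter_append_perm Pal M).length_eq
    simpa [hMal, hMun, length_append] using this
  have hMalsub : Mal <+ M := filter_sublist
  have hMunsub : Mun <+ M := filter_sublist
  -- aligned part
  have hal : (Mal.length : ℝ) ≤ (1 - δ) * m := by
    rcases hMalcase : Mal with _ | ⟨pq₀, Mal₀⟩
    · simp only [length_nil, Nat.cast_zero]
      have : (0:ℝ) ≤ (m:ℝ) := by positivity
      nlinarith
    · have hpq₀Mal : pq₀ ∈ Mal := by rw [hMalcase]; simp
      have hpq₀res : pq₀.1 % m = pq₀.2 % m := by
        have := List.of_mem_filter hpq₀Mal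
        simpa [hPal] using this
      have h0 := hmem pq₀ (hMalsub.mem hpq₀Mal)
      have e1 := Nat.div_add_mod pq₀.1 m
      have e2 := Nat.div_add_mod pq₀.2 m
      rw [h0.2.2.2.1] at e1
      rw [h0.2.2.2.2] at e2
      have hUV : U < V := by
        have hmul : m * U < m * V := by
          generalize hku : m * U = ku at e1
          generalize hkv : m * V = kv at e2
          generalize hra : pq₀.1 % m = ra at e1 hpq₀res
          generalize hrb : pq₀.2 % m = rb at e2 hpq₀res
          omega
        exact Nat.lt_of_mul_lt_mul_left hmul
      have hVUN : V - U < N := by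
        have hsub : m * (V - U) < N * m := by
          rw [Nat.mul_sub]
          generalize hku : m * U = ku at e1
          generalize hkv : m * V = kv at e2
          generalize hra : pq₀.1 % m = ra at e1 hpq₀res
          generalize hrb : pq₀.2 % m = rb at e2 hpq₀res
          have hnm := h0.2.2.1
          generalize hNM : N * m = nm at hnm ⊢
          omega
        have : (V - U) * m < N * m := by rwa [Nat.mul_comm m (V - U)] at hsub
        exact Nat.lt_of_mul_lt_mul_right this
      set Ms := Mal.map (fun pq => pq.1 % m) with hMs
      have hpwMs : Ms.Pairwise (· < ·) := by
        rw [hMs, pairwise_map]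
        refine (hpw.sublist hMalsub).imp_of_mem ?_
        intro a b ha hb hab
        exact res_lt_res hab.1 ((hmem a (hMalsub.mem ha)).2.2.2.1.trans
          (hmem b (hMalsub.mem hb)).2.2.2.1.symm)
      have hmemMs : ∀ s ∈ Ms, s < m ∧ cw U s = cw V s := by
        intro s hs
        rw [hMs, mem_map] at hs
        obtain ⟨pq, hpq, rfl⟩ := hs
        refine ⟨Nat.mod_lt _ hm, ?_⟩
        have hres : pq.1 % m = pq.2 % m := by
          have := List.of_mem_filter hpq
          simpa [hPal] using this
        have hfq := (hmem pq (hMalsub.mem hpq)).2.1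
        have := congrArg Prod.fst hfq
        rw [Hfst, Hfst, (hmem pq (hMalsub.mem hpq)).2.2.2.1,
          (hmem pq (hMalsub.mem hpq)).2.2.2.2] at this
        rw [← hres] at this
        exact this
      have := Hal U V hUV hVUN Ms hpwMs hmemMs
      rw [hMs, length_map] at this
      rwa [hMalcase] at this
  -- unaligned part
  have hun : (Mun.length : ℝ) ≤ 2 * ε₀ * m := by
    set Mp := Mun.map (fun pq => (pq.1 % m, pq.2 % m)) with hMp
    have hpwMp : Mp.Pairwise lt2 := by
      rw [hMp, pairwise_map]
      refine (hpw.sublist hMunsub).imp_of_mem ?_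
      intro a b ha hb hab
      have hda := (hmem a (hMunsub.mem ha))
      have hdb := (hmem b (hMunsub.mem hb))
      exact ⟨res_lt_res hab.1 (hda.2.2.2.1.trans hdb.2.2.2.1.symm),
        res_lt_res hab.2 (hda.2.2.2.2.trans hdb.2.2.2.2.symm)⟩
    have hmemMp : ∀ pq ∈ Mp, pq.1 < m ∧ pq.2 < m ∧ pq.1 ≠ pq.2 ∧ gg pq.1 = gg pq.2 := by
      intro pq hpq
      rw [hMp, mem_map] at hpq
      obtain ⟨rs, hrs, rfl⟩ := hpq
      have hne : ¬ (rs.1 % m = rs.2 % m) := by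
        have := List.of_mem_filter hrs
        simpa [hPal] using this
      have hfq := (hmem rs (hMunsub.mem hrs)).2.1
      have := congrArg Prod.snd hfq
      rw [Hsnd, Hsnd] at this
      exact ⟨Nat.mod_lt _ hm, Nat.mod_lt _ hm, hne, this⟩
    have := Hun Mp hpwMp hmemMp
    rwa [hMp, length_map] at this
  have : (M.length : ℝ) = (Mal.length : ℝ) + Mun.length := by exact_mod_cast hsplit.symm
  linarith

lemma count_bound
    (hm : 0 < m)
    (Hfst : ∀ q, (fq q).1 = cw (q / m) (q % m))
    (Hsnd : ∀ q, (fq q).2 = gg (q % m))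
    (Hal : ∀ u v : ℕ, u < v → v - u < N → ∀ Ms : List ℕ, Ms.Pairwise (· < ·) →
      (∀ s ∈ Ms, s < m ∧ cw u s = cw v s) → (Ms.length : ℝ) ≤ (1 - δ) * m)
    (Hun : ∀ Mp : List (ℕ × ℕ), Mp.Pairwise lt2 →
      (∀ pq ∈ Mp, pq.1 < m ∧ pq.2 < m ∧ pq.1 ≠ pq.2 ∧ gg pq.1 = gg pq.2) →
      (Mp.length : ℝ) ≤ 2 * ε₀ * m)
    (hδ1 : δ ≤ 1) (hε₀ : 0 ≤ ε₀) :
    ∀ (fuel : ℕ) (M : List (ℕ × ℕ)), M.length ≤ fuel → M.Pairwise lt2 →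
    (∀ pq ∈ M, pq.1 < pq.2 ∧ fq pq.1 = fq pq.2 ∧ pq.2 - pq.1 < N * m) →
    ∀ pqh ∈ M.head?, ∀ pql ∈ M.getLast?,
    (M.length : ℝ) ≤ ((1 - δ) * m + 2 * ε₀ * m) *
      ((((pql.1 / m : ℕ) : ℝ) - ((pqh.1 / m : ℕ) : ℝ)) +
       (((pql.2 / m : ℕ) : ℝ) - ((pqh.2 / m : ℕ) : ℝ)) + 1) := by
  have hα : (0:ℝ) ≤ (1 - δ) * m + 2 * ε₀ * m := by
    have h1 : (0:ℝ) ≤ (m:ℝ) := by positivity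
    nlinarith
  intro fuel
  induction fuel with
  | zero =>
    intro M hlen _ _ pqh hh _ _
    have : M = [] := List.eq_nil_of_length_eq_zero (Nat.le_zero.mp hlen)
    subst this; simp at hh
  | succ n IH =>
    intro M hlen hpw hmem pqh hhead pql hlast
    match M, hhead with
    | pqh' :: M₀, hhead =>
    have hpqheq : pqh' = pqh := by simpa using hhead
    subst hpqheq
    set M : List (ℕ × ℕ) := pqh' :: M₀ with hM
    set P : ℕ × ℕ → Bool :=
      fun pq => decide (pq.1 / m = pqh'.1 / m ∧ pq.2 / m = pqh'.2 / m) with hP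
    set G := M.takeWhile P with hGdef
    set R := M.dropWhile P with hRdef
    have hGR : G ++ R = M := List.takeWhile_append_dropWhile (p := P) (l := M)
    have hGcons : G = pqh' :: M₀.takeWhile P := by
      rw [hGdef, hM, List.takeWhile_cons_of_pos (by simp [hP])]
    have hGsub : G <+ M := List.takeWhile_sublist _
    have hRsub : R <+ M := List.dropWhile_sublist _
    have hGpred : ∀ pq ∈ G, pq.1 / m = pqh'.1 / m ∧ pq.2 / m = pqh'.2 / m := by
      intro pq h
      have := List.mem_takeWhile_imp (hGdef ▸ h)
      simpa [hP] using this
    have hGbound : (G.length : ℝ) ≤ (1 - δ) * m + 2 * ε₀ * m := by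
      refine window_bound hm Hfst Hsnd Hal Hun hδ1 (pqh'.1 / m) (pqh'.2 / m) G
        (hpw.sublist hGsub) ?_
      intro pq hpq
      have h1 := hmem pq (hGsub.mem hpq)
      have h2 := hGpred pq hpq
      exact ⟨h1.1, h1.2.1, h1.2.2, h2.1, h2.2⟩
    rcases hRcase : R with _ | ⟨pq', R₀⟩
    · have hMG : M = G := by rw [← hGR, hRcase, append_nil]
      have hpqlG : pql ∈ G := by
        rw [← hMG]
        obtain ⟨h, rfl⟩ := List.mem_getLast?_eq_getLast hlast
        exact List.getLast_mem h
      have hd := hGpred pql hpqlG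
      rw [hd.1, hd.2]
      have hlenMG : (M.length : ℝ) = G.length := by rw [hMG]
      rw [hlenMG]
      have : ((pqh'.1 / m : ℕ) : ℝ) - ((pqh'.1 / m : ℕ) : ℝ) +
          (((pqh'.2 / m : ℕ) : ℝ) - ((pqh'.2 / m : ℕ) : ℝ)) + 1 = 1 := by ring
      rw [this, mul_one]
      exact hGbound
    · have hpq'R : pq' ∈ R := by rw [hRcase]; simp
      have hdw : M.dropWhile P = pq' :: R₀ := by rw [← hRdef]; exact hRcase
      have hnotpred : ¬ (pq'.1 / m = pqh'.1 / m ∧ pq'.2 / m = pqh'.2 / m) := by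
        have := not_pred_of_dropWhile_cons hdw
        simpa [hP] using this
      have hcross : lt2 pqh' pq' := by
        have hpwGR : (G ++ R).Pairwise lt2 := by rw [hGR]; exact hpw
        exact (List.pairwise_append.mp hpwGR).2.2 pqh'
          (by rw [hGcons]; simp) pq' hpq'R
      have hdle1 : pqh'.1 / m ≤ pq'.1 / m := Nat.div_le_div_right (le_of_lt hcross.1)
      have hdle2 : pqh'.2 / m ≤ pq'.2 / m := Nat.div_le_div_right (le_of_lt hcross.2)
      have hkey : pqh'.1 / m + pqh'.2 / m + 1 ≤ pq'.1 / m + pq'.2 / m := by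
        generalize h1 : pqh'.1 / m = a at hdle1 hnotpred
        generalize h2 : pqh'.2 / m = b at hdle2 hnotpred
        generalize h3 : pq'.1 / m = c at hdle1 hnotpred
        generalize h4 : pq'.2 / m = d at hdle2 hnotpred
        omega
      have hlastR : pql ∈ R.getLast? := by
        have : M.getLast? = R.getLast? := by
          rw [← hGR]
          exact List.getLast?_append_of_ne_nil G (by rw [hRcase]; simp)
        rwa [this] at hlast
      have hG1 : 1 ≤ G.length := by rw [hGcons]; simp
      have hlenGR : G.length + R.length = M.length := by rw [← hGR, length_append]
      have hRlen : R.length ≤ n := by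
        have : M.length ≤ n + 1 := hlen
        omega
      have hIH := IH R hRlen (hpw.sublist hRsub)
        (fun pq h => hmem pq (hRsub.mem h)) pq' (by rw [hRcase]; rfl) pql hlastR
      have hlenM : (M.length : ℝ) = (G.length : ℝ) + R.length := by
        exact_mod_cast congrArg (Nat.cast : ℕ → ℝ) hlenGR.symm
      -- real versions
      have ckey : ((pqh'.1 / m : ℕ) : ℝ) + ((pqh'.2 / m : ℕ) : ℝ) + 1 ≤
          ((pq'.1 / m : ℕ) : ℝ) + ((pq'.2 / m : ℕ) : ℝ) := by exact_mod_cast hkey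
      have hmul := mul_le_mul_of_nonneg_left
        (show ((((pql.1 / m : ℕ) : ℝ) - ((pq'.1 / m : ℕ) : ℝ)) +
          (((pql.2 / m : ℕ) : ℝ) - ((pq'.2 / m : ℕ) : ℝ)) + 1) + 1 ≤
          ((((pql.1 / m : ℕ) : ℝ) - ((pqh'.1 / m : ℕ) : ℝ)) +
          (((pql.2 / m : ℕ) : ℝ) - ((pqh'.2 / m : ℕ) : ℝ)) + 1) from by linarith) hα
      rw [mul_add, mul_one] at hmul
      linarith

end Counting
end SyncAux

namespace SyncAux
open List

variable {γ : Type*}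

lemma flatten_len (N m : ℕ) (g : ℕ → ℕ → γ) :
    (List.ofFn fun k : Fin N => List.ofFn fun i : Fin m => g k.1 i.1).flatten.length
      = N * m := by
  induction N generalizing g with
  | zero => simp
  | succ n IH =>
    rw [List.ofFn_succ, List.flatten_cons, length_append]
    have : (List.ofFn fun k : Fin n => List.ofFn fun i : Fin m =>
        g (Fin.succ k).1 i.1) = (List.ofFn fun k : Fin n => List.ofFn fun i : Fin m =>
        (fun u s => g (u + 1) s) k.1 i.1) := by
      simp [Fin.val_succ]
    rw [this, IH (fun u s => g (u + 1) s)]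
    have h1 : (n + 1) * m = n * m + m := Nat.succ_mul n m
    have h2 : (List.ofFn fun i : Fin m => g (0 : Fin (n+1)).1 i.1).length = m := by simp
    omega

lemma flatten_get? : ∀ (N : ℕ) (g : ℕ → ℕ → γ) (m q : ℕ), q < N * m →
    (List.ofFn fun k : Fin N => List.ofFn fun i : Fin m => g k.1 i.1).flatten[q]? =
      some (g (q / m) (q % m)) := by
  intro N
  induction N with
  | zero => intro g m q h; simp at h
  | succ n IH =>
    intro g m q h
    have hm : 0 < m := by
      rcases Nat.eq_zero_or_pos m with h0 | h0
      · subst h0; simp at h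
      · exact h0
    rw [List.ofFn_succ, List.flatten_cons]
    rcases Nat.lt_or_ge q m with hq | hq
    · rw [List.getElem?_append_left (by simpa using hq)]
      rw [Nat.div_eq_of_lt hq, Nat.mod_eq_of_lt hq]
      have : ((List.ofFn fun i : Fin m => g (0 : Fin (n+1)).1 i.1))[q]'(by simpa using hq)
          = g 0 q := by simp
      rw [List.getElem?_eq_getElem (by simpa using hq), this]
    · rw [List.getElem?_append_right (by simpa using hq)]
      have hrw : (List.ofFn fun k : Fin n => List.ofFn fun i : Fin m =>
          g (Fin.succ k).1 i.1) = (List.ofFn fun k : Fin n => List.ofFn fun i : Fin m =>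
          (fun u s => g (u + 1) s) k.1 i.1) := by
        simp [Fin.val_succ]
      have hlen : (List.ofFn (fun i : Fin m => g (0 : Fin (n+1)).1 i.1)).length = m := by simp
      have hsm : (n + 1) * m = n * m + m := Nat.succ_mul n m
      rw [hlen, hrw, IH (fun u s => g (u + 1) s) m (q - m) (by omega)]
      congr 2
      · have := Nat.div_eq_sub_div hm hq
        omega
      · exact (Nat.mod_eq_sub_mod hq).symm

lemma flatten_getElem (N m q : ℕ) (g : ℕ → ℕ → γ)
    (h : q < (List.ofFn fun k : Fin N => List.ofFn fun i : Fin m => g k.1 i.1).flatten.length) :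
    (List.ofFn fun k : Fin N => List.ofFn fun i : Fin m => g k.1 i.1).flatten[q] =
      g (q / m) (q % m) := by
  rw [List.getElem_eq_iff]
  exact flatten_get? N g m q (by rwa [flatten_len] at h)

end SyncAux

namespace SyncAux
open List

lemma hal_aux {Sh : Type*} [DecidableEq Sh] (m N : ℕ) (hm : 0 < m) (hN : 0 < N) (δ : ℝ)
    (Chat : Set (Fin m → Sh))
    (hdist : ∀ c₁ ∈ Chat, ∀ c₂ ∈ Chat, c₁ ≠ c₂ → δ * (m : ℝ) ≤ (hammingDist c₁ c₂ : ℝ))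
    (w : Fin N → (Fin m → Sh)) (hw : ∀ k, w k ∈ Chat) (hinj : Function.Injective w) :
    ∀ u v : ℕ, u < v → v - u < N → ∀ Ms : List ℕ, Ms.Pairwise (· < ·) →
    (∀ s ∈ Ms, s < m ∧ w ⟨u % N, Nat.mod_lt _ hN⟩ ⟨s % m, Nat.mod_lt _ hm⟩ =
      w ⟨v % N, Nat.mod_lt _ hN⟩ ⟨s % m, Nat.mod_lt _ hm⟩) →
    (Ms.length : ℝ) ≤ (1 - δ) * m := by
  classical
  intro u v huv hvuN Ms hpws hmems
  have hmodne : u % N ≠ v % N := by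
    intro heq
    have hmodeq : u ≡ v [MOD N] := heq
    have hdvd : N ∣ v - u := (Nat.modEq_iff_dvd' (le_of_lt huv)).mp hmodeq
    have : N ≤ v - u := Nat.le_of_dvd (by omega) hdvd
    omega
  set k₁ : Fin N := ⟨u % N, Nat.mod_lt _ hN⟩ with hk₁
  set k₂ : Fin N := ⟨v % N, Nat.mod_lt _ hN⟩ with hk₂
  have hk12 : k₁ ≠ k₂ := fun h => hmodne (congrArg Fin.val h)
  have hwne : w k₁ ≠ w k₂ := fun h => hk12 (hinj h)
  have hdistc := hdist _ (hw k₁) _ (hw k₂) hwne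
  set Agr := Finset.univ.filter (fun s : Fin m => w k₁ s = w k₂ s) with hAgr
  have hcard : Agr.card + hammingDist (w k₁) (w k₂) = m := by
    have h1 := Finset.card_filter_add_card_filter_not
      (s := (Finset.univ : Finset (Fin m))) (p := fun s => w k₁ s = w k₂ s)
    have h2 : hammingDist (w k₁) (w k₂) =
        (Finset.univ.filter (fun s : Fin m => ¬ (w k₁ s = w k₂ s))).card := by
      simp [hammingDist, Ne]
    rw [h2, hAgr]
    simpa [Finset.card_univ] using h1
  set lst := Ms.map (fun s => (⟨s % m, Nat.mod_lt _ hm⟩ : Fin m)) with hlst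
  have hpwlst : lst.Pairwise (· < ·) := by
    rw [hlst, pairwise_map]
    refine hpws.imp_of_mem ?_
    intro a b ha hb hab
    have ha' := (hmems a ha).1
    have hb' := (hmems b hb).1
    have : a % m < b % m := by
      rw [Nat.mod_eq_of_lt ha', Nat.mod_eq_of_lt hb']; exact hab
    exact this
  have hnodup : lst.Nodup := hpwlst.imp ne_of_lt
  have hsub : ∀ t ∈ lst, t ∈ Agr := by
    intro t ht
    rw [hlst, mem_map] at ht
    obtain ⟨s, hs, rfl⟩ := ht
    rw [hAgr, Finset.mem_filter]
    exact ⟨Finset.mem_univ _, (hmems s hs).2⟩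
  have hlen : Ms.length ≤ Agr.card := by
    have h1 : lst.toFinset.card = lst.length := List.toFinset_card_of_nodup hnodup
    have h2 : lst.toFinset ⊆ Agr := fun t ht => hsub t (List.mem_toFinset.mp ht)
    have h3 := Finset.card_le_card h2
    rw [h1] at h3
    rwa [hlst, length_map] at h3
  have hc1 : (Ms.length : ℝ) ≤ (Agr.card : ℝ) := by exact_mod_cast hlen
  have hc2 : (Agr.card : ℝ) + (hammingDist (w k₁) (w k₂) : ℝ) = m := by exact_mod_cast hcard
  linarith

lemma hun_aux {Ssc : Type*} (m : ℕ) (hm : 0 < m) (ε₀ : ℝ) (hε₀ : 0 ≤ ε₀)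
    (sc : Fin m → Ssc) (hsync0 : IsSyncString ε₀ (List.ofFn sc)) :
    ∀ Mp : List (ℕ × ℕ), Mp.Pairwise lt2 →
    (∀ pq ∈ Mp, pq.1 < m ∧ pq.2 < m ∧ pq.1 ≠ pq.2 ∧
      sc ⟨pq.1 % m, Nat.mod_lt _ hm⟩ = sc ⟨pq.2 % m, Nat.mod_lt _ hm⟩) →
    (Mp.length : ℝ) ≤ 2 * ε₀ * m := by
  classical
  intro Mp hppw hpmem
  set T := List.ofFn sc with hT
  have hTlen : T.length = m := by rw [hT, length_ofFn]
  have hgetEq : ∀ a b : ℕ, a < m → b < m →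
      sc ⟨a % m, Nat.mod_lt _ hm⟩ = sc ⟨b % m, Nat.mod_lt _ hm⟩ →
      ∀ (h1 : a < T.length) (h2 : b < T.length), T[a] = T[b] := by
    intro a b ha hb hvv h1 h2
    have e1 : (⟨a % m, Nat.mod_lt _ hm⟩ : Fin m) = ⟨a, ha⟩ :=
      Fin.ext (Nat.mod_eq_of_lt ha)
    have e2 : (⟨b % m, Nat.mod_lt _ hm⟩ : Fin m) = ⟨b, hb⟩ :=
      Fin.ext (Nat.mod_eq_of_lt hb)
    rw [e1, e2] at hvv
    have g1 : (List.ofFn sc)[a]'(by simpa using ha) = sc ⟨a, ha⟩ := by simp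
    have g2 : (List.ofFn sc)[b]'(by simpa using hb) = sc ⟨b, hb⟩ := by simp
    show (List.ofFn sc)[a]'(by simpa using ha) = (List.ofFn sc)[b]'(by simpa using hb)
    rw [g1, g2]
    exact hvv
  set P2 : ℕ × ℕ → Bool := fun pq => decide (pq.1 < pq.2) with hP2
  set M1 := Mp.filter P2 with hM1
  set M2 := Mp.filter (fun pq => ! P2 pq) with hM2
  have hsplit : M1.length + M2.length = Mp.length := by
    have := (List.filter_append_perm P2 Mp).length_eq
    simpa [hM1, hM2, length_append] using this
  have hmnn : (0:ℝ) ≤ ε₀ * m := by positivity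
  have hbound1 : (M1.length : ℝ) ≤ ε₀ * m := by
    by_cases hM1nil : M1 = []
    · rw [hM1nil]; simp; positivity
    · obtain ⟨pq₁, hhead⟩ : ∃ a, a ∈ M1.head? := by
        cases hM : M1 with
        | nil => exact absurd hM hM1nil
        | cons a l => exact ⟨a, rfl⟩
      have hsm := self_matching T ε₀ hε₀ hsync0 M1.length M1 le_rfl
        (hppw.sublist (filter_sublist)) ?_ pq₁ hhead
      · have h1 : (0:ℝ) ≤ (pq₁.1 : ℝ) := Nat.cast_nonneg _
        have h2 : (0:ℝ) ≤ (pq₁.2 : ℝ) := Nat.cast_nonneg _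
        rw [hTlen] at hsm
        nlinarith
      · intro pq hpq
        have hlt : pq.1 < pq.2 := by
          have := List.of_mem_filter hpq
          simpa [hP2] using this
        obtain ⟨ha, hb, hne, hvv⟩ := hpmem pq ((filter_sublist).mem hpq)
        exact ⟨hlt, by omega, hgetEq pq.1 pq.2 ha hb hvv⟩
  have hbound2 : (M2.length : ℝ) ≤ ε₀ * m := by
    set M2s := M2.map (fun pq => (pq.2, pq.1)) with hM2s
    have hpw2 : M2s.Pairwise lt2 := by
      rw [hM2s, pairwise_map]
      refine (hppw.sublist (filter_sublist)).imp ?_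
      intro a b hab
      exact ⟨hab.2, hab.1⟩
    by_cases hM2nil : M2s = []
    · have : M2.length = 0 := by
        have := congrArg List.length hM2nil
        rw [hM2s, length_map] at this
        simpa using this
      rw [this]; simp; positivity
    · obtain ⟨pq₁, hhead⟩ : ∃ a, a ∈ M2s.head? := by
        cases hM : M2s with
        | nil => exact absurd hM hM2nil
        | cons a l => exact ⟨a, rfl⟩
      have hsm := self_matching T ε₀ hε₀ hsync0 M2s.length M2s le_rfl hpw2 ?_ pq₁ hhead
      · have h1 : (0:ℝ) ≤ (pq₁.1 : ℝ) := Nat.cast_nonneg _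
        have h2 : (0:ℝ) ≤ (pq₁.2 : ℝ) := Nat.cast_nonneg _
        rw [hTlen] at hsm
        have hlen2 : M2s.length = M2.length := by rw [hM2s, length_map]
        rw [hlen2] at hsm
        nlinarith
      · intro pq hpq
        rw [hM2s, mem_map] at hpq
        obtain ⟨rs, hrs, rfl⟩ := hpq
        have hnlt : ¬ rs.1 < rs.2 := by
          have := List.of_mem_filter hrs
          simpa [hP2] using this
        obtain ⟨ha, hb, hne, hvv⟩ := hpmem rs ((filter_sublist).mem hrs)
        have hlt : rs.2 < rs.1 := by omega
        exact ⟨hlt, by omega, hgetEq rs.2 rs.1 hb ha hvv.symm⟩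
  have hMp : (Mp.length : ℝ) = (M1.length : ℝ) + M2.length := by exact_mod_cast hsplit.symm
  linarith

end SyncAux

namespace SyncAux

lemma numeric_aux (ε₀ δ : ℝ) (hε₀ : 0 < ε₀) (hε₀1 : ε₀ < 1) (hδ : 0 < δ) (hδ1 : δ < 1)
    (hc10 : 1 - δ * (1 - ε₀) / (1 + ε₀) ≤ 1 / 10) :
    4 * ((1 - δ) + 2 * ε₀) ≤ 5 * (1 - δ * (1 - ε₀) / (1 + ε₀)) := by
  have h1e : (0:ℝ) < 1 + ε₀ := by linarith
  set c : ℝ := 1 - δ * (1 - ε₀) / (1 + ε₀) with hc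
  have hc' : c * (1 + ε₀) = (1 + ε₀) - δ * (1 - ε₀) := by
    rw [hc]
    field_simp
  clear_value c
  have h9 : 9 / 10 * (1 + ε₀) ≤ δ * (1 - ε₀) := by
    have hmul := mul_le_mul_of_nonneg_right hc10 h1e.le
    linarith [hc', hmul]
  have h19 : ε₀ ≤ 1 / 19 := by nlinarith [h9, mul_nonneg (by linarith : (0:ℝ) ≤ 1 - δ) (by linarith : (0:ℝ) ≤ 1 - ε₀)]
  have hP : 0 ≤ (5 * c - 4 * ((1 - δ) + 2 * ε₀)) * (1 + ε₀) := by
    have hexp : (5 * c - 4 * ((1 - δ) + 2 * ε₀)) * (1 + ε₀) =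
        5 * (c * (1 + ε₀)) - (4 * ((1 - δ) + 2 * ε₀)) * (1 + ε₀) := by ring
    rw [hexp, hc']
    have key : (0:ℝ) ≤ (1 - δ) * (1 - 9 * ε₀) + 2 * ε₀ * (1 - 4 * ε₀) := by
      have k1 : (0:ℝ) ≤ (1 - δ) * (1 - 9 * ε₀) :=
        mul_nonneg (by linarith) (by linarith)
      have k2 : (0:ℝ) ≤ 2 * ε₀ * (1 - 4 * ε₀) := by nlinarith
      linarith
    nlinarith [key]
  nlinarith [hP, h1e]

end SyncAux

open SyncAux List in
/-- Concatenating `N` pairwise distinct codewords of the code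
obtained by coordinatewise pairing a distance-`δ·m` code `Ĉ ⊆ Σ̂^m` with an
`ε₀`-synchronization circle of length `m` yields an `ε₁`-synchronization
circle, where `ε₁ = 10·(1 − δ·(1−ε₀)/(1+ε₀))`. -/
theorem concat_code_isSyncCircle {Sh Ssc : Type*} [DecidableEq Sh]
    (m N : ℕ) (ε₀ δ : ℝ)
    (hε₀ : 0 < ε₀) (hε₀1 : ε₀ < 1) (hδ : 0 < δ) (hδ1 : δ < 1)
    (Chat : Set (Fin m → Sh))
    (hdist : ∀ c₁ ∈ Chat, ∀ c₂ ∈ Chat, c₁ ≠ c₂ → δ * (m : ℝ) ≤ (hammingDist c₁ c₂ : ℝ))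
    (sc : Fin m → Ssc) (hsc : IsSyncCircle ε₀ (List.ofFn sc))
    (w : Fin N → (Fin m → Sh)) (hw : ∀ k, w k ∈ Chat) (hinj : Function.Injective w) :
    IsSyncCircle (10 * (1 - δ * (1 - ε₀) / (1 + ε₀)))
      (List.ofFn fun k : Fin N =>
        List.ofFn fun i : Fin m => (w k i, sc i)).flatten := by
  classical
  set c : ℝ := 1 - δ * (1 - ε₀) / (1 + ε₀) with hcdef
  clear_value c
  set Slist := (List.ofFn fun k : Fin N =>
    List.ofFn fun i : Fin m => (w k i, sc i)).flatten with hSdef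
  have h1e : (0:ℝ) < 1 + ε₀ := by linarith
  have hθnn : (0:ℝ) ≤ (1 - ε₀) / (1 + ε₀) := by
    apply div_nonneg <;> linarith
  have hθle : (1 - ε₀) / (1 + ε₀) ≤ 1 - ε₀ := div_le_self (by linarith) (by linarith)
  have hδθ : δ * (1 - ε₀) / (1 + ε₀) = δ * ((1 - ε₀) / (1 + ε₀)) := by ring
  have hcpos : 0 < c := by
    have h1 : δ * ((1 - ε₀) / (1 + ε₀)) ≤ δ * 1 :=
      mul_le_mul_of_nonneg_left (hθle.trans (by linarith)) hδ.le
    rw [hcdef, hδθ]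
    nlinarith
  have hε₀c : ε₀ ≤ c := by
    have h1 : δ * ((1 - ε₀) / (1 + ε₀)) ≤ 1 * (1 - ε₀) :=
      mul_le_mul hδ1.le hθle hθnn (by norm_num)
    rw [hcdef, hδθ]
    linarith
  intro r hr1 hrn
  intro i j k hi hij hjk hk
  rw [length_rotate] at hk
  have hSlen0 : Slist.length = N * m := by
    rw [hSdef]
    rw [List.length_flatten, List.map_ofFn]
    have : (List.length ∘ fun k : Fin N => List.ofFn fun i : Fin m => (w k i, sc i)) =
        fun _ : Fin N => m := by
      funext kk; simp
    rw [this, List.sum_ofFn]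
    simp [Finset.sum_const, Finset.card_univ, mul_comm]
  rw [hSlen0] at hk
  have hnm2 : 2 ≤ N * m := by omega
  have hm : 0 < m := by
    rcases Nat.eq_zero_or_pos m with h0 | h0
    · rw [h0] at hnm2; simp at hnm2
    · exact h0
  have hN : 0 < N := by
    rcases Nat.eq_zero_or_pos N with h0 | h0
    · rw [h0] at hnm2; simp at hnm2
    · exact h0
  -- coordinate functions
  set cw : ℕ → ℕ → Sh := fun u s => w ⟨u % N, Nat.mod_lt _ hN⟩ ⟨s % m, Nat.mod_lt _ hm⟩
    with hcw
  set gg : ℕ → Ssc := fun s => sc ⟨s % m, Nat.mod_lt _ hm⟩ with hgg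
  set gfun : ℕ → ℕ → Sh × Ssc := fun u s => (cw u s, gg s) with hgfun
  set F : ℕ → Sh × Ssc := fun q => gfun (q / m) (q % m) with hF
  have Hfst : ∀ q, (F q).1 = cw (q / m) (q % m) := fun q => rfl
  have Hsnd : ∀ q, (F q).2 = gg (q % m) := fun q => rfl
  have hSrw : Slist = (List.ofFn fun kk : Fin N =>
      List.ofFn fun ii : Fin m => gfun kk.1 ii.1).flatten := by
    rw [hSdef]
    congr 1
    apply congrArg List.ofFn
    funext kk
    apply congrArg List.ofFn
    funext ii
    simp [hgfun, hcw, hgg, Nat.mod_eq_of_lt kk.isLt, Nat.mod_eq_of_lt ii.isLt]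
  have hget? : ∀ q, q < N * m → Slist[q]? = some (F q) := by
    intro q hq
    rw [hSrw]
    exact flatten_get? N gfun m q hq
  have hFper : ∀ q, F (q % (N * m)) = F q := by
    intro q
    have h1 : q % (N * m) % m = q % m := Nat.mod_mod_of_dvd q (dvd_mul_left m N)
    have h2 : q % (N * m) / m % N = q / m % N := by
      rw [mul_comm N m, Nat.mod_mul_right_div_self]
      exact Nat.mod_mod_of_dvd _ dvd_rfl
    rw [hF]
    simp only [hgfun, hcw, hgg]
    rw [h1]
    congr 2
    exact Fin.ext (by simpa using h2)
  set R := Slist.rotate (r - 1) with hR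
  have hRlen : R.length = N * m := by rw [hR, length_rotate, hSlen0]
  set Fr : ℕ → Sh × Ssc := fun p => F (p + (r - 1)) with hFr
  have hRget : ∀ (p : ℕ) (hp : p < R.length), R[p] = Fr p := by
    intro p hp
    have hp' : p < (Slist.rotate (r - 1)).length := by rwa [hR] at hp
    have key : (Slist.rotate (r - 1))[p]'hp' = Fr p := by
      rw [List.getElem_rotate]
      have hlt : (p + (r - 1)) % Slist.length < N * m := by
        rw [hSlen0]
        exact Nat.mod_lt _ (by omega)
      rw [List.getElem_eq_iff]
      rw [hget? _ hlt]
      rw [hSlen0, hFper]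
    exact key
  set LA := j - i with hLA
  set LB := k - j with hLB
  set x := r - 1 + (i - 1) with hx
  set y := r - 1 + (j - 1) with hy
  set z := r - 1 + (k - 1) with hz
  have hyx : y = x + LA := by omega
  have hzy : z = y + LB := by omega
  have hA : strSlice R i j = seg F x LA := by
    rw [strSlice_eq_seg R Fr hRget i j hi (le_of_lt hij) (by rw [hRlen]; omega)]
    apply List.ext_getElem
    · simp [hLA]
    · intro t h1 h2
      rw [seg_getElem Fr (i - 1) (j - i) t h1, seg_getElem F x LA t h2]
      simp only [hFr]
      exact congrArg F (by omega)
  have hB : strSlice R j k = seg F y LB := by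
    rw [strSlice_eq_seg R Fr hRget j k (by omega) (le_of_lt hjk) (by rw [hRlen]; omega)]
    apply List.ext_getElem
    · simp [hLB]
    · intro t h1 h2
      rw [seg_getElem Fr (j - 1) (k - j) t h1, seg_getElem F y LB t h2]
      simp only [hFr]
      exact congrArg F (by omega)
  rw [hA, hB]
  set A := seg F x LA with hAdef
  set B := seg F y LB with hBdef
  have hALen : A.length = LA := by simp [hAdef]
  have hBLen : B.length = LB := by simp [hBdef]
  have hLA1 : 1 ≤ LA := by omega
  have hLB1 : 1 ≤ LB := by omega
  have hLr_eq : (k : ℝ) - i = (LA : ℝ) + LB := by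
    rw [hLA, hLB]
    push_cast [Nat.cast_sub (le_of_lt hij), Nat.cast_sub (le_of_lt hjk)]
    ring
  have hLr2 : (2:ℝ) ≤ (k : ℝ) - i := by
    have : i + 2 ≤ k := by omega
    have := (Nat.cast_le (α := ℝ)).mpr this
    push_cast at this
    linarith
  have hED : (editDistance A B : ℝ) = (LA : ℝ) + LB - 2 * lcsLen A B := by
    rw [editDistance_real, hALen, hBLen]
  suffices hlcs : (lcsLen A B : ℝ) < 5 * c * ((LA : ℝ) + LB) by
    rw [hED, hLr_eq]
    linarith only [hlcs]
  by_cases hceasy : (1:ℝ)/10 < c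
  · have b1 : (lcsLen A B : ℝ) ≤ LA := by exact_mod_cast hALen ▸ lcsLen_le_left A B
    have b2 : (lcsLen A B : ℝ) ≤ LB := by exact_mod_cast hBLen ▸ lcsLen_le_right A B
    have hLABpos : (0:ℝ) < (LA : ℝ) + LB := by
      rw [← hLr_eq]; linarith
    have hmul : 0 < (5 * c - 1/2) * ((LA : ℝ) + LB) :=
      mul_pos (by linarith only [hceasy]) hLABpos
    linarith only [b1, b2, hmul]
  · push_neg at hceasy
    by_cases hLm : k - i ≤ m
    · -- short interval : direct use of the synchronization circle
      set ρ := x % m with hρ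
      set rot := (List.ofFn sc).rotate ρ with hrot
      have hρm : ρ < m := Nat.mod_lt _ hm
      have hsyncrot : IsSyncString ε₀ rot := by
        have := hsc (ρ + 1) (by omega) (by rw [length_ofFn]; omega)
        simpa using this
      have hrotlen : rot.length = m := by rw [hrot, length_rotate, length_ofFn]
      set ggρ : ℕ → Ssc := fun t => gg (t + ρ) with hggρ
      have hrotget : ∀ (t : ℕ) (ht : t < rot.length), rot[t] = ggρ t := by
        intro t ht
        have ht' : t < ((List.ofFn sc).rotate ρ).length := by rwa [hrot] at ht
        have key : ((List.ofFn sc).rotate ρ)[t]'ht' = ggρ t := by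
          rw [List.getElem_rotate]
          simp only [hggρ, hgg]
          rw [List.getElem_ofFn]
          congr 1
          apply Fin.ext
          simp [length_ofFn]
        exact key
      have haux : ∀ a b : ℕ, gg (a + b) = gg (b + a % m) := by
        intro a b
        simp only [hgg]
        congr 1
        apply Fin.ext
        simp only
        rw [Nat.add_mod b (a % m), Nat.mod_mod_of_dvd a dvd_rfl, ← Nat.add_mod,
          Nat.add_comm b a]
      have hsndF : ∀ q : ℕ, (F q).2 = gg q := by
        intro q
        rw [hF]
        simp only [hgfun, hgg]
        congr 1
        exact Fin.ext (by simp [Nat.mod_mod_of_dvd])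
      have hmapA : A.map Prod.snd = strSlice rot 1 (LA + 1) := by
        rw [strSlice_eq_seg rot ggρ hrotget 1 (LA + 1) le_rfl (by omega)
          (by rw [hrotlen]; omega)]
        rw [hAdef]
        apply List.ext_getElem
        · simp
        · intro t h1 h2
          rw [List.getElem_map, seg_getElem F x LA t (by simpa using h1),
            seg_getElem ggρ (1 - 1) (LA + 1 - 1) t h2]
          rw [hsndF (x + t), haux x t, hggρ]
          simp only
          rw [← hρ]
          exact congrArg gg (by omega)
      have hmapB : B.map Prod.snd = strSlice rot (LA + 1) (LA + LB + 1) := by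
        rw [strSlice_eq_seg rot ggρ hrotget (LA + 1) (LA + LB + 1) (by omega) (by omega)
          (by rw [hrotlen]; omega)]
        rw [hBdef]
        apply List.ext_getElem
        · simp
        · intro t h1 h2
          rw [List.getElem_map, seg_getElem F y LB t (by simpa using h1),
            seg_getElem ggρ (LA + 1 - 1) (LA + LB + 1 - (LA + 1)) t h2]
          rw [hsndF (y + t), hyx, Nat.add_assoc, haux x (LA + t), hggρ]
          simp only
          rw [← hρ]
          exact congrArg gg (by omega)
      have hsync := hsyncrot 1 (LA + 1) (LA + LB + 1) le_rfl (by omega) (by omega)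
        (by rw [hrotlen]; omega)
      have hlen1 : (strSlice rot 1 (LA + 1)).length = LA := by
        rw [strSlice_length rot _ _ le_rfl (by omega) (by rw [hrotlen]; omega)]
        omega
      have hlen2 : (strSlice rot (LA + 1) (LA + LB + 1)).length = LB := by
        rw [strSlice_length rot _ _ (by omega) (by omega) (by rw [hrotlen]; omega)]
        omega
      have hEDsnd : (editDistance (strSlice rot 1 (LA + 1))
          (strSlice rot (LA + 1) (LA + LB + 1)) : ℝ) =
          (LA : ℝ) + LB - 2 * lcsLen (strSlice rot 1 (LA + 1))
            (strSlice rot (LA + 1) (LA + LB + 1)) := by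
        rw [editDistance_real, hlen1, hlen2]
      have hlcs_le : (lcsLen A B : ℝ) ≤ lcsLen (strSlice rot 1 (LA + 1))
          (strSlice rot (LA + 1) (LA + LB + 1)) := by
        rw [← hmapA, ← hmapB]
        exact_mod_cast lcsLen_map_le Prod.snd A B
      have hcast : ((LA + LB + 1 : ℕ) : ℝ) - ((1:ℕ) : ℝ) = (LA : ℝ) + LB := by
        push_cast; ring
      rw [hcast] at hsync
      have hLABpos : (0:ℝ) < (LA : ℝ) + LB := by rw [← hLr_eq]; linarith
      have hsnd_bound : (lcsLen (strSlice rot 1 (LA + 1))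
          (strSlice rot (LA + 1) (LA + LB + 1)) : ℝ) < ε₀ / 2 * ((LA:ℝ) + LB) := by
        linarith only [hsync, hEDsnd]
      have h5c : ε₀ / 2 * ((LA:ℝ) + LB) < 5 * c * ((LA:ℝ) + LB) := by
        have hlt : ε₀ / 2 < 5 * c := by linarith only [hε₀c, hcpos]
        exact mul_lt_mul_of_pos_right hlt hLABpos
      linarith only [hlcs_le, hsnd_bound, h5c]
    · -- long interval : counting argument
      push_neg at hLm
      have hsync0 : IsSyncString ε₀ (List.ofFn sc) := by
        have := hsc 1 le_rfl (by rw [length_ofFn]; omega)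
        simpa using this
      have Hal : ∀ u v : ℕ, u < v → v - u < N → ∀ Ms : List ℕ, Ms.Pairwise (· < ·) →
          (∀ s ∈ Ms, s < m ∧ cw u s = cw v s) → (Ms.length : ℝ) ≤ (1 - δ) * m :=
        hal_aux m N hm hN δ Chat hdist w hw hinj
      have Hun : ∀ Mp : List (ℕ × ℕ), Mp.Pairwise lt2 →
          (∀ pq ∈ Mp, pq.1 < m ∧ pq.2 < m ∧ pq.1 ≠ pq.2 ∧ gg pq.1 = gg pq.2) →
          (Mp.length : ℝ) ≤ 2 * ε₀ * m :=
        hun_aux m hm ε₀ hε₀.le sc hsync0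
      rcases Nat.eq_zero_or_pos (lcsLen A B) with h0 | hposl
      · rw [h0]
        have hLABpos : (0:ℝ) < (LA : ℝ) + LB := by rw [← hLr_eq]; linarith
        push_cast
        have := mul_pos hcpos hLABpos
        linarith only [this]
      · obtain ⟨U, hUlen, hUA, hUB⟩ := exists_lcs A B
        rw [sublist_iff_exists_fin_orderEmbedding_get_eq] at hUA hUB
        obtain ⟨fa, hfa⟩ := hUA
        obtain ⟨gb, hgb⟩ := hUB
        set M := List.ofFn (fun t : Fin U.length =>
          (x + (fa t).1, y + (gb t).1)) with hM
        have hMlen : M.length = lcsLen A B := by rw [hM, length_ofFn, hUlen]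
        have hMpw : M.Pairwise lt2 := by
          rw [hM, pairwise_ofFn]
          intro t t' htt'
          have h1 : (fa t).1 < (fa t').1 := fa.strictMono htt'
          have h2 : (gb t).1 < (gb t').1 := gb.strictMono htt'
          exact ⟨Nat.add_lt_add_left h1 x, Nat.add_lt_add_left h2 y⟩
        have hkNm : k - i ≤ N * m := by omega
        have hMbounds : ∀ pq ∈ M, x ≤ pq.1 ∧ pq.1 < y ∧ y ≤ pq.2 ∧ pq.2 < z := by
          intro pq hpq
          rw [hM, List.mem_ofFn] at hpq
          obtain ⟨t, rfl⟩ := hpq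
          dsimp only
          have hfa' : (fa t).1 < LA := by rw [← hALen]; exact (fa t).isLt
          have hgb' : (gb t).1 < LB := by rw [← hBLen]; exact (gb t).isLt
          constructor
          · omega
          constructor
          · omega
          constructor
          · omega
          · omega
        have hMmem : ∀ pq ∈ M, pq.1 < pq.2 ∧ F pq.1 = F pq.2 ∧ pq.2 - pq.1 < N * m := by
          intro pq hpq
          have hb := hMbounds pq hpq
          rw [hM, List.mem_ofFn] at hpq
          obtain ⟨t, rfl⟩ := hpq
          dsimp only
          have hfa' : (fa t).1 < LA := by rw [← hALen]; exact (fa t).isLt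
          have hgb' : (gb t).1 < LB := by rw [← hBLen]; exact (gb t).isLt
          refine ⟨by omega, ?_, by omega⟩
          have e1 : A[(fa t).1]'((fa t).isLt) = F (x + (fa t).1) :=
            seg_getElem F x LA (fa t).1 ((fa t).isLt)
          have e2 : B[(gb t).1]'((gb t).isLt) = F (y + (gb t).1) :=
            seg_getElem F y LB (gb t).1 ((gb t).isLt)
          have hv : A.get (fa t) = B.get (gb t) := by rw [← hfa t, ← hgb t]
          rw [List.get_eq_getElem, List.get_eq_getElem, e1, e2] at hv
          exact hv
        have hMne : M ≠ [] := by
          intro h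
          rw [h] at hMlen
          simp at hMlen
          omega
        have hheadm : M.head hMne ∈ M.head? := by rw [List.head?_eq_head hMne]; rfl
        have hlastm : M.getLast hMne ∈ M.getLast? := by
          rw [List.getLast?_eq_getLast_of_ne_nil hMne]; rfl
        have hcount := count_bound hm Hfst Hsnd Hal Hun hδ1.le hε₀.le M.length M le_rfl
          hMpw hMmem (M.head hMne) hheadm (M.getLast hMne) hlastm
        set pqh := M.head hMne with hpqh
        set pql := M.getLast hMne with hpql
        have hbh := hMbounds pqh (List.head_mem hMne)
        have hbl := hMbounds pql (List.getLast_mem hMne)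
        -- real arithmetic
        have q1 : ((pql.1 / m : ℕ) : ℝ) * m ≤ pql.1 := by
          exact_mod_cast Nat.div_mul_le_self pql.1 m
        have q3 : ((pql.2 / m : ℕ) : ℝ) * m ≤ pql.2 := by
          exact_mod_cast Nat.div_mul_le_self pql.2 m
        have q2 : (pqh.1 : ℝ) < ((pqh.1 / m : ℕ) : ℝ) * m + m := by
          have hn : pqh.1 < pqh.1 / m * m + m := by
            have e := Nat.div_add_mod pqh.1 m
            have hmod := Nat.mod_lt pqh.1 hm
            rw [Nat.mul_comm]
            generalize m * (pqh.1 / m) = K at e ⊢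
            generalize pqh.1 % m = rm at e hmod
            omega
          exact_mod_cast hn
        have q4 : (pqh.2 : ℝ) < ((pqh.2 / m : ℕ) : ℝ) * m + m := by
          have hn : pqh.2 < pqh.2 / m * m + m := by
            have e := Nat.div_add_mod pqh.2 m
            have hmod := Nat.mod_lt pqh.2 hm
            rw [Nat.mul_comm]
            generalize m * (pqh.2 / m) = K at e ⊢
            generalize pqh.2 % m = rm at e hmod
            omega
          exact_mod_cast hn
        have cb1 : (pql.1 : ℝ) + 1 ≤ (x : ℝ) + LA := by
          have : pql.1 + 1 ≤ x + LA := by omega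
          exact_mod_cast this
        have cb2 : (x : ℝ) ≤ pqh.1 := by exact_mod_cast hbh.1
        have cb3 : (pql.2 : ℝ) + 1 ≤ (x : ℝ) + LA + LB := by
          have : pql.2 + 1 ≤ x + LA + LB := by omega
          exact_mod_cast this
        have cb4 : (x : ℝ) + LA ≤ pqh.2 := by
          have : x + LA ≤ pqh.2 := by omega
          exact_mod_cast this
        set β : ℝ := (1 - δ) + 2 * ε₀ with hβ
        have hβpos : 0 < β := by rw [hβ]; linarith
        have hmpos : (0:ℝ) < (m:ℝ) := by exact_mod_cast hm
        have hΔ : (m : ℝ) * ((((pql.1 / m : ℕ) : ℝ) - ((pqh.1 / m : ℕ) : ℝ)) +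
            (((pql.2 / m : ℕ) : ℝ) - ((pqh.2 / m : ℕ) : ℝ)) + 1) ≤
            (LA : ℝ) + LB + 3 * m - 2 := by
          linarith only [q1, q2, q3, q4, cb1, cb2, cb3, cb4]
        have hc1 : ((1 - δ) * m + 2 * ε₀ * m) *
            ((((pql.1 / m : ℕ) : ℝ) - ((pqh.1 / m : ℕ) : ℝ)) +
             (((pql.2 / m : ℕ) : ℝ) - ((pqh.2 / m : ℕ) : ℝ)) + 1) =
            β * ((m : ℝ) * ((((pql.1 / m : ℕ) : ℝ) - ((pqh.1 / m : ℕ) : ℝ)) +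
             (((pql.2 / m : ℕ) : ℝ) - ((pqh.2 / m : ℕ) : ℝ)) + 1)) := by
          rw [hβ]; ring
        have hfinal1 : (lcsLen A B : ℝ) ≤ β * ((LA : ℝ) + LB + 3 * m - 2) := by
          have hcast : ((M.length : ℕ) : ℝ) = (lcsLen A B : ℝ) := by
            exact_mod_cast congrArg (Nat.cast : ℕ → ℝ) hMlen
          rw [hcast] at hcount
          rw [hc1] at hcount
          calc (lcsLen A B : ℝ) ≤ β * ((m : ℝ) * ((((pql.1 / m : ℕ) : ℝ) -
              ((pqh.1 / m : ℕ) : ℝ)) + (((pql.2 / m : ℕ) : ℝ) -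
              ((pqh.2 / m : ℕ) : ℝ)) + 1)) := hcount
          _ ≤ β * ((LA : ℝ) + LB + 3 * m - 2) :=
            mul_le_mul_of_nonneg_left hΔ hβpos.le
        have hm1L : (m : ℝ) + 1 ≤ (LA : ℝ) + LB := by
          have : m + 1 ≤ LA + LB := by omega
          exact_mod_cast this
        have hlt4 : β * ((LA : ℝ) + LB + 3 * m - 2) < β * (4 * ((LA : ℝ) + LB)) := by
          apply mul_lt_mul_of_pos_left _ hβpos
          linarith
        have hnum : 4 * β ≤ 5 * c := by
          rw [hβ, hcdef]
          exact numeric_aux ε₀ δ hε₀ hε₀1 hδ hδ1 (by rw [← hcdef]; exact hceasy)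
        have hLABpos : (0:ℝ) ≤ (LA : ℝ) + LB := by positivity
        have h5 : 4 * β * ((LA : ℝ) + LB) ≤ 5 * c * ((LA : ℝ) + LB) :=
          mul_le_mul_of_nonneg_right hnum hLABpos
        linarith only [hfinal1, hlt4, h5]
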